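/- In the modified quantum superalgebra U̇ of osp(1|2), the assignments φ(Ẽ_{λ,λ-2}) = t^{λ+p(λ)} E_{λ,λ-2}, φ(F̃_{λ,λ+2}) = F_{λ,λ+2}, φ(1̃_λ) = 1_λ (for all λ ∈ ℤ) define an algebra isomorphism φ: U̇(sl(2)) → U̇, with inverse given by E_{λ,λ-2} ↦ t^{-λ-p(λ)} Ẽ_{λ,λ-2}, F_{λ,λ+2} ↦ F̃_{λ,λ+2}, 1_λ ↦ 1̃_λ. -/

import Mathlib

noncomputable section

/-- The quantum integer `[a]_v` for an integer `a`. -/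
def qintz {F : Type*} [Field F] (v : F) (a : ℤ) : F := (v ^ a - v ^ (-a)) / (v - v⁻¹)

/-- The parity function `p(λ)`: `0` for even `λ`, `1` for odd `λ`. -/
def par (a : ℤ) : ℤ := if Even a then 0 else 1

/-- The defining relations of the modified quantum superalgebra `U̇` of `osp(1|2)`:
generators `1_λ = ι (0,λ)`, `E_{λ,λ-2} = ι (1,λ)`, `F_{λ,λ+2} = ι (2,λ)` for `λ ∈ ℤ`,
with orthogonal idempotent relations, idempotent compatibility, and
`E_{λ,λ-2}F_{λ-2,λ} − t² F_{λ,λ+2}E_{λ+2,λ} = t^(-λ-p(λ)) [λ]_v 1_λ`. -/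
inductive UdotRel (F : Type) [Field F] (v t : F) :
    FreeAlgebra F (Fin 3 × ℤ) → FreeAlgebra F (Fin 3 × ℤ) → Prop
  | one_one (a b : ℤ) :
      UdotRel F v t (FreeAlgebra.ι F ((0 : Fin 3), a) * FreeAlgebra.ι F ((0 : Fin 3), b))
        (if a = b then FreeAlgebra.ι F ((0 : Fin 3), a) else 0)
  | E_one (a b : ℤ) :
      UdotRel F v t (FreeAlgebra.ι F ((1 : Fin 3), a) * FreeAlgebra.ι F ((0 : Fin 3), b))
        (if b = a - 2 then FreeAlgebra.ι F ((1 : Fin 3), a) else 0)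
  | one_E (a b : ℤ) :
      UdotRel F v t (FreeAlgebra.ι F ((0 : Fin 3), b) * FreeAlgebra.ι F ((1 : Fin 3), a))
        (if b = a then FreeAlgebra.ι F ((1 : Fin 3), a) else 0)
  | F_one (a b : ℤ) :
      UdotRel F v t (FreeAlgebra.ι F ((2 : Fin 3), a) * FreeAlgebra.ι F ((0 : Fin 3), b))
        (if b = a + 2 then FreeAlgebra.ι F ((2 : Fin 3), a) else 0)
  | one_F (a b : ℤ) :
      UdotRel F v t (FreeAlgebra.ι F ((0 : Fin 3), b) * FreeAlgebra.ι F ((2 : Fin 3), a))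
        (if b = a then FreeAlgebra.ι F ((2 : Fin 3), a) else 0)
  | comm (a : ℤ) :
      UdotRel F v t
        (FreeAlgebra.ι F ((1 : Fin 3), a) * FreeAlgebra.ι F ((2 : Fin 3), a - 2)
          - t ^ 2 • (FreeAlgebra.ι F ((2 : Fin 3), a) * FreeAlgebra.ι F ((1 : Fin 3), a + 2)))
        ((t ^ (-(a + par a)) * qintz v a) • FreeAlgebra.ι F ((0 : Fin 3), a))

/-- The modified quantum superalgebra `U̇` of `osp(1|2)`. -/
abbrev Udot (F : Type) [Field F] (v t : F) := RingQuot (UdotRel F v t)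

/-- The idempotent generator `1_λ` of `U̇`. -/
def Udone (F : Type) [Field F] (v t : F) (a : ℤ) : Udot F v t :=
  RingQuot.mkAlgHom F (UdotRel F v t) (FreeAlgebra.ι F ((0 : Fin 3), a))

/-- The generator `E_{λ,λ-2}` of `U̇`. -/
def UdE (F : Type) [Field F] (v t : F) (a : ℤ) : Udot F v t :=
  RingQuot.mkAlgHom F (UdotRel F v t) (FreeAlgebra.ι F ((1 : Fin 3), a))

/-- The generator `F_{λ,λ+2}` of `U̇`. -/
def UdF (F : Type) [Field F] (v t : F) (a : ℤ) : Udot F v t :=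
  RingQuot.mkAlgHom F (UdotRel F v t) (FreeAlgebra.ι F ((2 : Fin 3), a))

/-- The defining relations of Lusztig's modified quantum algebra `U̇(sl(2))`:
generators `1̃_λ = ι (0,λ)`, `Ẽ_{λ,λ-2} = ι (1,λ)`, `F̃_{λ,λ+2} = ι (2,λ)` for `λ ∈ ℤ`,
with the analogous idempotent relations and
`Ẽ_{λ,λ-2}F̃_{λ-2,λ} − F̃_{λ,λ+2}Ẽ_{λ+2,λ} = [λ]_v 1̃_λ`. -/
inductive Usl2Rel (F : Type) [Field F] (v : F) :
    FreeAlgebra F (Fin 3 × ℤ) → FreeAlgebra F (Fin 3 × ℤ) → Prop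
  | one_one (a b : ℤ) :
      Usl2Rel F v (FreeAlgebra.ι F ((0 : Fin 3), a) * FreeAlgebra.ι F ((0 : Fin 3), b))
        (if a = b then FreeAlgebra.ι F ((0 : Fin 3), a) else 0)
  | E_one (a b : ℤ) :
      Usl2Rel F v (FreeAlgebra.ι F ((1 : Fin 3), a) * FreeAlgebra.ι F ((0 : Fin 3), b))
        (if b = a - 2 then FreeAlgebra.ι F ((1 : Fin 3), a) else 0)
  | one_E (a b : ℤ) :
      Usl2Rel F v (FreeAlgebra.ι F ((0 : Fin 3), b) * FreeAlgebra.ι F ((1 : Fin 3), a))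
        (if b = a then FreeAlgebra.ι F ((1 : Fin 3), a) else 0)
  | F_one (a b : ℤ) :
      Usl2Rel F v (FreeAlgebra.ι F ((2 : Fin 3), a) * FreeAlgebra.ι F ((0 : Fin 3), b))
        (if b = a + 2 then FreeAlgebra.ι F ((2 : Fin 3), a) else 0)
  | one_F (a b : ℤ) :
      Usl2Rel F v (FreeAlgebra.ι F ((0 : Fin 3), b) * FreeAlgebra.ι F ((2 : Fin 3), a))
        (if b = a then FreeAlgebra.ι F ((2 : Fin 3), a) else 0)
  | comm (a : ℤ) :
      Usl2Rel F v
        (FreeAlgebra.ι F ((1 : Fin 3), a) * FreeAlgebra.ι F ((2 : Fin 3), a - 2)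
          - FreeAlgebra.ι F ((2 : Fin 3), a) * FreeAlgebra.ι F ((1 : Fin 3), a + 2))
        (qintz v a • FreeAlgebra.ι F ((0 : Fin 3), a))

/-- Lusztig's modified quantum algebra `U̇(sl(2))`. -/
abbrev Usl2dot (F : Type) [Field F] (v : F) := RingQuot (Usl2Rel F v)

/-- The idempotent generator `1̃_λ` of `U̇(sl(2))`. -/
def Usone (F : Type) [Field F] (v : F) (a : ℤ) : Usl2dot F v :=
  RingQuot.mkAlgHom F (Usl2Rel F v) (FreeAlgebra.ι F ((0 : Fin 3), a))

/-- The generator `Ẽ_{λ,λ-2}` of `U̇(sl(2))`. -/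
def UsE (F : Type) [Field F] (v : F) (a : ℤ) : Usl2dot F v :=
  RingQuot.mkAlgHom F (Usl2Rel F v) (FreeAlgebra.ι F ((1 : Fin 3), a))

/-- The generator `F̃_{λ,λ+2}` of `U̇(sl(2))`. -/
def UsF (F : Type) [Field F] (v : F) (a : ℤ) : Usl2dot F v :=
  RingQuot.mkAlgHom F (Usl2Rel F v) (FreeAlgebra.ι F ((2 : Fin 3), a))


section Aux

variable {F : Type} [Field F] {v t : F}

lemma par_add_two (a : ℤ) : par (a + 2) = par a := by
  simp [par, Int.even_add, Int.even_iff]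

-- relations in Udot
lemma Ud_one_one (a b : ℤ) :
    Udone F v t a * Udone F v t b = if a = b then Udone F v t a else 0 := by
  simpa [Udone, map_mul, apply_ite] using
    RingQuot.mkAlgHom_rel F (UdotRel.one_one (F := F) (v := v) (t := t) a b)

lemma Ud_E_one (a b : ℤ) :
    UdE F v t a * Udone F v t b = if b = a - 2 then UdE F v t a else 0 := by
  simpa [UdE, Udone, map_mul, apply_ite] using
    RingQuot.mkAlgHom_rel F (UdotRel.E_one (F := F) (v := v) (t := t) a b)

lemma Ud_one_E (a b : ℤ) :
    Udone F v t b * UdE F v t a = if b = a then UdE F v t a else 0 := by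
  simpa [UdE, Udone, map_mul, apply_ite] using
    RingQuot.mkAlgHom_rel F (UdotRel.one_E (F := F) (v := v) (t := t) a b)

lemma Ud_F_one (a b : ℤ) :
    UdF F v t a * Udone F v t b = if b = a + 2 then UdF F v t a else 0 := by
  simpa [UdF, Udone, map_mul, apply_ite] using
    RingQuot.mkAlgHom_rel F (UdotRel.F_one (F := F) (v := v) (t := t) a b)

lemma Ud_one_F (a b : ℤ) :
    Udone F v t b * UdF F v t a = if b = a then UdF F v t a else 0 := by
  simpa [UdF, Udone, map_mul, apply_ite] using
    RingQuot.mkAlgHom_rel F (UdotRel.one_F (F := F) (v := v) (t := t) a b)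

lemma Ud_comm (a : ℤ) :
    UdE F v t a * UdF F v t (a - 2) - t ^ 2 • (UdF F v t a * UdE F v t (a + 2))
      = (t ^ (-(a + par a)) * qintz v a) • Udone F v t a := by
  simpa [UdE, UdF, Udone, map_mul, map_sub, map_smul] using
    RingQuot.mkAlgHom_rel F (UdotRel.comm (F := F) (v := v) (t := t) a)

-- relations in Usl2dot
lemma Us_one_one (a b : ℤ) :
    Usone F v a * Usone F v b = if a = b then Usone F v a else 0 := by
  simpa [Usone, map_mul, apply_ite] using
    RingQuot.mkAlgHom_rel F (Usl2Rel.one_one (F := F) (v := v) a b)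

lemma Us_E_one (a b : ℤ) :
    UsE F v a * Usone F v b = if b = a - 2 then UsE F v a else 0 := by
  simpa [UsE, Usone, map_mul, apply_ite] using
    RingQuot.mkAlgHom_rel F (Usl2Rel.E_one (F := F) (v := v) a b)

lemma Us_one_E (a b : ℤ) :
    Usone F v b * UsE F v a = if b = a then UsE F v a else 0 := by
  simpa [UsE, Usone, map_mul, apply_ite] using
    RingQuot.mkAlgHom_rel F (Usl2Rel.one_E (F := F) (v := v) a b)

lemma Us_F_one (a b : ℤ) :
    UsF F v a * Usone F v b = if b = a + 2 then UsF F v a else 0 := by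
  simpa [UsF, Usone, map_mul, apply_ite] using
    RingQuot.mkAlgHom_rel F (Usl2Rel.F_one (F := F) (v := v) a b)

lemma Us_one_F (a b : ℤ) :
    Usone F v b * UsF F v a = if b = a then UsF F v a else 0 := by
  simpa [UsF, Usone, map_mul, apply_ite] using
    RingQuot.mkAlgHom_rel F (Usl2Rel.one_F (F := F) (v := v) a b)

lemma Us_comm (a : ℤ) :
    UsE F v a * UsF F v (a - 2) - UsF F v a * UsE F v (a + 2)
      = qintz v a • Usone F v a := by
  simpa [UsE, UsF, Usone, map_mul, map_sub, map_smul] using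
    RingQuot.mkAlgHom_rel F (Usl2Rel.comm (F := F) (v := v) a)

end Aux

/-- Generator assignment for `φ : U̇(sl(2)) → U̇`. -/
noncomputable def phiGen (F : Type) [Field F] (v t : F) : Fin 3 × ℤ → Udot F v t :=
  fun p =>
    if p.1 = 0 then Udone F v t p.2
    else if p.1 = 1 then t ^ (p.2 + par p.2) • UdE F v t p.2
    else UdF F v t p.2

@[simp] lemma phiGen_one (F : Type) [Field F] (v t : F) (a : ℤ) :
    phiGen F v t ((0 : Fin 3), a) = Udone F v t a := rfl

@[simp] lemma phiGen_E (F : Type) [Field F] (v t : F) (a : ℤ) :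
    phiGen F v t ((1 : Fin 3), a) = t ^ (a + par a) • UdE F v t a := rfl

@[simp] lemma phiGen_F (F : Type) [Field F] (v t : F) (a : ℤ) :
    phiGen F v t ((2 : Fin 3), a) = UdF F v t a := rfl

/-- Generator assignment for `φ' : U̇ → U̇(sl(2))`. -/
noncomputable def psiGen (F : Type) [Field F] (v t : F) : Fin 3 × ℤ → Usl2dot F v :=
  fun p =>
    if p.1 = 0 then Usone F v p.2
    else if p.1 = 1 then t ^ (-(p.2 + par p.2)) • UsE F v p.2
    else UsF F v p.2

@[simp] lemma psiGen_one (F : Type) [Field F] (v t : F) (a : ℤ) :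
    psiGen F v t ((0 : Fin 3), a) = Usone F v a := rfl

@[simp] lemma psiGen_E (F : Type) [Field F] (v t : F) (a : ℤ) :
    psiGen F v t ((1 : Fin 3), a) = t ^ (-(a + par a)) • UsE F v a := rfl

@[simp] lemma psiGen_F (F : Type) [Field F] (v t : F) (a : ℤ) :
    psiGen F v t ((2 : Fin 3), a) = UsF F v a := rfl


section Homs

variable {F : Type} [Field F] {v t : F}

lemma tne (ht : t ^ 2 = -1) : t ≠ 0 := by
  intro h
  apply one_ne_zero (α := F)
  linear_combination ht - t * h

lemma phiRel (ht : t ^ 2 = -1) : ∀ ⦃x y⦄, Usl2Rel F v x y →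
    (FreeAlgebra.lift F (phiGen F v t)) x = (FreeAlgebra.lift F (phiGen F v t)) y := by
  have ht0 : t ≠ 0 := tne ht
  have hinv : ∀ e : ℤ, t ^ e * t ^ (-e) = 1 := fun e => by
    rw [← zpow_add₀ ht0]; simp
  intro x y h
  induction h with
  | one_one a b =>
      simp [FreeAlgebra.lift_ι_apply, apply_ite, Ud_one_one]
      split <;> simp_all
  | E_one a b =>
      simp [FreeAlgebra.lift_ι_apply, apply_ite, smul_mul_assoc, Ud_E_one, smul_ite]
      split <;> simp_all
  | one_E a b =>
      simp [FreeAlgebra.lift_ι_apply, apply_ite, mul_smul_comm, Ud_one_E, smul_ite]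
      split <;> simp_all
  | F_one a b =>
      simp [FreeAlgebra.lift_ι_apply, apply_ite, Ud_F_one]
      split <;> simp_all
  | one_F a b =>
      simp [FreeAlgebra.lift_ι_apply, apply_ite, Ud_one_F]
      split <;> simp_all
  | comm a =>
      have h2 : t ^ ((a + 2) + par (a + 2)) = t ^ (a + par a) * t ^ 2 := by
        rw [par_add_two, ← zpow_natCast t 2, ← zpow_add₀ ht0]
        congr 1; ring
      have s1 : (t ^ (a + par a) • UdE F v t a) * UdF F v t (a - 2)
          = t ^ (a + par a) • (UdE F v t a * UdF F v t (a - 2)) := smul_mul_assoc _ _ _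
      have s2 : UdF F v t a * ((t ^ (a + par a) * t ^ 2) • UdE F v t (a + 2))
          = t ^ (a + par a) • (t ^ 2 • (UdF F v t a * UdE F v t (a + 2))) := by
        rw [mul_smul_comm]
        exact mul_smul _ _ _
      have s3 : t ^ (a + par a) • (UdE F v t a * UdF F v t (a - 2))
          - t ^ (a + par a) • (t ^ 2 • (UdF F v t a * UdE F v t (a + 2)))
          = t ^ (a + par a) • (UdE F v t a * UdF F v t (a - 2)
              - t ^ 2 • (UdF F v t a * UdE F v t (a + 2))) := by rw [smul_sub]
      have s4 : t ^ (a + par a) • ((t ^ (-(a + par a)) * qintz v a) • Udone F v t a)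
          = qintz v a • Udone F v t a :=
        (smul_smul _ _ _).trans (by rw [← mul_assoc, hinv, one_mul])
      have main : (t ^ (a + par a) • UdE F v t a) * UdF F v t (a - 2)
          - UdF F v t a * ((t ^ (a + par a) * t ^ 2) • UdE F v t (a + 2))
          = qintz v a • Udone F v t a := by
        rw [s1, s2, s3, Ud_comm, s4]
      simp only [map_sub, map_mul, map_smul, FreeAlgebra.lift_ι_apply,
        phiGen_one, phiGen_E, phiGen_F]
      rw [h2]
      exact main

lemma psiRel (ht : t ^ 2 = -1) : ∀ ⦃x y⦄, UdotRel F v t x y →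
    (FreeAlgebra.lift F (psiGen F v t)) x = (FreeAlgebra.lift F (psiGen F v t)) y := by
  have ht0 : t ≠ 0 := tne ht
  intro x y h
  induction h with
  | one_one a b =>
      simp [FreeAlgebra.lift_ι_apply, apply_ite, Us_one_one]
      split <;> simp_all
  | E_one a b =>
      simp [FreeAlgebra.lift_ι_apply, apply_ite, smul_mul_assoc, Us_E_one, smul_ite]
      split <;> simp_all
  | one_E a b =>
      simp [FreeAlgebra.lift_ι_apply, apply_ite, mul_smul_comm, Us_one_E, smul_ite]
      split <;> simp_all
  | F_one a b =>
      simp [FreeAlgebra.lift_ι_apply, apply_ite, Us_F_one]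
      split <;> simp_all
  | one_F a b =>
      simp [FreeAlgebra.lift_ι_apply, apply_ite, Us_one_F]
      split <;> simp_all
  | comm a =>
      have h2 : t ^ (2 : ℕ) * t ^ (-((a + 2) + par (a + 2))) = t ^ (-(a + par a)) := by
        rw [par_add_two, ← zpow_natCast t 2, ← zpow_add₀ ht0]
        congr 1; ring
      have s1 : (t ^ (-(a + par a)) • UsE F v a) * UsF F v (a - 2)
          = t ^ (-(a + par a)) • (UsE F v a * UsF F v (a - 2)) := smul_mul_assoc _ _ _
      have s2 : t ^ 2 • (UsF F v a * (t ^ (-((a + 2) + par (a + 2))) • UsE F v (a + 2)))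
          = t ^ (-(a + par a)) • (UsF F v a * UsE F v (a + 2)) := by
        rw [mul_smul_comm]
        exact (smul_smul _ _ _).trans (by rw [h2])
      have s3 : t ^ (-(a + par a)) • (UsE F v a * UsF F v (a - 2))
          - t ^ (-(a + par a)) • (UsF F v a * UsE F v (a + 2))
          = t ^ (-(a + par a)) • (UsE F v a * UsF F v (a - 2)
              - UsF F v a * UsE F v (a + 2)) := by rw [smul_sub]
      have s4 : t ^ (-(a + par a)) • (qintz v a • Usone F v a)
          = (t ^ (-(a + par a)) * qintz v a) • Usone F v a := smul_smul _ _ _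
      have main : (t ^ (-(a + par a)) • UsE F v a) * UsF F v (a - 2)
          - t ^ 2 • (UsF F v a * (t ^ (-((a + 2) + par (a + 2))) • UsE F v (a + 2)))
          = (t ^ (-(a + par a)) * qintz v a) • Usone F v a := by
        rw [s1, s2, s3, Us_comm, s4]
      simp only [map_sub, map_mul, map_smul, FreeAlgebra.lift_ι_apply,
        psiGen_one, psiGen_E, psiGen_F]
      exact main

/-- The homomorphism `φ : U̇(sl(2)) → U̇`. -/
noncomputable def phiHom (ht : t ^ 2 = -1) : Usl2dot F v →ₐ[F] Udot F v t :=
  RingQuot.liftAlgHom F ⟨FreeAlgebra.lift F (phiGen F v t), phiRel ht⟩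

/-- The homomorphism `φ' : U̇ → U̇(sl(2))`. -/
noncomputable def psiHom (ht : t ^ 2 = -1) : Udot F v t →ₐ[F] Usl2dot F v :=
  RingQuot.liftAlgHom F ⟨FreeAlgebra.lift F (psiGen F v t), psiRel ht⟩

lemma phiHom_E (ht : t ^ 2 = -1) (a : ℤ) :
    phiHom (v := v) ht (UsE F v a) = t ^ (a + par a) • UdE F v t a := by
  rw [UsE, phiHom, RingQuot.liftAlgHom_mkAlgHom_apply, FreeAlgebra.lift_ι_apply, phiGen_E]

lemma phiHom_F (ht : t ^ 2 = -1) (a : ℤ) :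
    phiHom (v := v) ht (UsF F v a) = UdF F v t a := by
  rw [UsF, phiHom, RingQuot.liftAlgHom_mkAlgHom_apply, FreeAlgebra.lift_ι_apply, phiGen_F]

lemma phiHom_one (ht : t ^ 2 = -1) (a : ℤ) :
    phiHom (v := v) ht (Usone F v a) = Udone F v t a := by
  rw [Usone, phiHom, RingQuot.liftAlgHom_mkAlgHom_apply, FreeAlgebra.lift_ι_apply, phiGen_one]

lemma psiHom_E (ht : t ^ 2 = -1) (a : ℤ) :
    psiHom (v := v) ht (UdE F v t a) = t ^ (-(a + par a)) • UsE F v a := by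
  rw [UdE, psiHom, RingQuot.liftAlgHom_mkAlgHom_apply, FreeAlgebra.lift_ι_apply, psiGen_E]

lemma psiHom_F (ht : t ^ 2 = -1) (a : ℤ) :
    psiHom (v := v) ht (UdF F v t a) = UsF F v a := by
  rw [UdF, psiHom, RingQuot.liftAlgHom_mkAlgHom_apply, FreeAlgebra.lift_ι_apply, psiGen_F]

lemma psiHom_one (ht : t ^ 2 = -1) (a : ℤ) :
    psiHom (v := v) ht (Udone F v t a) = Usone F v a := by
  rw [Udone, psiHom, RingQuot.liftAlgHom_mkAlgHom_apply, FreeAlgebra.lift_ι_apply, psiGen_one]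

end Homs

/-- the assignments `φ(Ẽ_{λ,λ-2}) = t^(λ+p(λ)) E_{λ,λ-2}`,
`φ(F̃_{λ,λ+2}) = F_{λ,λ+2}`, `φ(1̃_λ) = 1_λ` define an algebra isomorphism
`φ : U̇(sl(2)) → U̇`, with inverse given by `E_{λ,λ-2} ↦ t^(-λ-p(λ)) Ẽ_{λ,λ-2}`,
`F_{λ,λ+2} ↦ F̃_{λ,λ+2}`, `1_λ ↦ 1̃_λ`. -/
theorem modified_osp_iso_modified_sl2 (F : Type) [Field F] (v t : F)
    (ht : t ^ 2 = -1) (hv : v ≠ 0) :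
    ∃ (φ : Usl2dot F v →ₐ[F] Udot F v t) (φ' : Udot F v t →ₐ[F] Usl2dot F v),
      (∀ a : ℤ, φ (UsE F v a) = t ^ (a + par a) • UdE F v t a) ∧
      (∀ a : ℤ, φ (UsF F v a) = UdF F v t a) ∧
      (∀ a : ℤ, φ (Usone F v a) = Udone F v t a) ∧
      (∀ a : ℤ, φ' (UdE F v t a) = t ^ (-(a + par a)) • UsE F v a) ∧
      (∀ a : ℤ, φ' (UdF F v t a) = UsF F v a) ∧
      (∀ a : ℤ, φ' (Udone F v t a) = Usone F v a) ∧
      φ.comp φ' = AlgHom.id F (Udot F v t) ∧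
      φ'.comp φ = AlgHom.id F (Usl2dot F v) := by
  have ht0 : t ≠ 0 := tne ht
  have hEud : ∀ a : ℤ, (phiHom (v := v) ht) ((psiHom (v := v) ht) (UdE F v t a)) = UdE F v t a := by
    intro a
    rw [psiHom_E, map_smul, phiHom_E]
    exact (smul_smul _ _ _).trans
      (by rw [← zpow_add₀ ht0, show -(a + par a) + (a + par a) = 0 by ring, zpow_zero, one_smul])
  have hEus : ∀ a : ℤ, (psiHom (v := v) ht) ((phiHom (v := v) ht) (UsE F v a)) = UsE F v a := by
    intro a
    rw [phiHom_E, map_smul, psiHom_E]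
    exact (smul_smul _ _ _).trans
      (by rw [← zpow_add₀ ht0, show (a + par a) + -(a + par a) = 0 by ring, zpow_zero, one_smul])
  refine ⟨phiHom ht, psiHom ht, phiHom_E ht, phiHom_F ht, phiHom_one ht,
    psiHom_E ht, psiHom_F ht, psiHom_one ht, ?_, ?_⟩
  · apply RingQuot.ringQuot_ext'
    apply FreeAlgebra.hom_ext
    funext p
    obtain ⟨i, a⟩ := p
    fin_cases i
    · simpa [Udone] using (by rw [psiHom_one, phiHom_one] :
        (phiHom (v := v) ht) ((psiHom (v := v) ht) (Udone F v t a)) = Udone F v t a)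
    · simpa [UdE] using hEud a
    · simpa [UdF] using (by rw [psiHom_F, phiHom_F] :
        (phiHom (v := v) ht) ((psiHom (v := v) ht) (UdF F v t a)) = UdF F v t a)
  · apply RingQuot.ringQuot_ext'
    apply FreeAlgebra.hom_ext
    funext p
    obtain ⟨i, a⟩ := p
    fin_cases i
    · simpa [Usone] using (by rw [phiHom_one, psiHom_one] :
        (psiHom (v := v) ht) ((phiHom (v := v) ht) (Usone F v a)) = Usone F v a)
    · simpa [UsE] using hEus a
    · simpa [UsF] using (by rw [phiHom_F, psiHom_F] :
        (psiHom (v := v) ht) ((phiHom (v := v) ht) (UsF F v a)) = UsF F v a)
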